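/- Let H be a complex inner product space and let x, y, z ∈ H all be nonzero. Define s(u, v) = √(1 − C(u, v)) for nonzero u, v ∈ H. Then s(x, z) ≤ s(x, y) + s(y, z). -/

import Mathlib

open scoped InnerProductSpace

/-- The coherence of two vectors of a complex inner product space
(inner product conjugate-linear in the first argument):
`C(u, v) = ‖⟪u, v⟫‖² / (‖u‖² · ‖v‖²)`. -/
noncomputable def coherence {H : Type*} [NormedAddCommGroup H]
    [InnerProductSpace ℂ H] (u v : H) : ℝ :=
  ‖⟪u, v⟫_ℂ‖ ^ 2 / (‖u‖ ^ 2 * ‖v‖ ^ 2)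

lemma coh_real_key (A B Cn s t : ℝ) (hA : 0 ≤ A) (hB : 0 ≤ B) (hC : 0 ≤ Cn)
    (hC1 : Cn ≤ 1) (hA1 : A ≤ 1) (hB1 : B ≤ 1)
    (hs : s = Real.sqrt (1 - A ^ 2)) (ht : t = Real.sqrt (1 - B ^ 2))
    (h : A * B - s * t ≤ Cn) : Real.sqrt (1 - Cn ^ 2) ≤ s + t := by
  have hs0 : 0 ≤ s := hs ▸ Real.sqrt_nonneg _
  have ht0 : 0 ≤ t := ht ▸ Real.sqrt_nonneg _
  have hs2 : s ^ 2 = 1 - A ^ 2 := by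
    rw [hs, Real.sq_sqrt]; nlinarith
  have ht2 : t ^ 2 = 1 - B ^ 2 := by
    rw [ht, Real.sq_sqrt]; nlinarith
  rcases le_or_gt 1 (s + t) with hst | hst
  · calc Real.sqrt (1 - Cn ^ 2) ≤ Real.sqrt 1 := by
          apply Real.sqrt_le_sqrt; nlinarith
       _ = 1 := Real.sqrt_one
       _ ≤ s + t := hst
  · have h1 : s ^ 2 + t ^ 2 ≤ 1 := by nlinarith
    have hABst : s * t ≤ A * B := by
      nlinarith [sq_nonneg (A*B - s*t), sq_nonneg (A*B + s*t),
        mul_nonneg hA hB, mul_nonneg hs0 ht0]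
    have h2 : 1 - Cn ^ 2 ≤ (s + t) ^ 2 := by
      nlinarith [mul_nonneg hs0 ht0, mul_nonneg hA hB, sq_nonneg (A*B - s*t)]
    calc Real.sqrt (1 - Cn ^ 2) ≤ Real.sqrt ((s + t) ^ 2) := Real.sqrt_le_sqrt h2
      _ = s + t := Real.sqrt_sq (by linarith)

lemma coh_perp_norm {H : Type*} [NormedAddCommGroup H] [InnerProductSpace ℂ H]
    (v p : H) (hv : ‖v‖ = 1) (hp : ‖p‖ = 1) :
    ‖p - ⟪v, p⟫_ℂ • v‖ ^ 2 = 1 - ‖⟪v, p⟫_ℂ‖ ^ 2 := by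
  have h1 : RCLike.re ⟪p, ⟪v, p⟫_ℂ • v⟫_ℂ = ‖⟪v, p⟫_ℂ‖ ^ 2 := by
    rw [inner_smul_right, ← inner_conj_symm p v, RCLike.mul_conj]
    simp [← Complex.ofReal_pow]
  rw [@norm_sub_sq ℂ, h1, norm_smul, hv, hp]
  ring_nf

lemma coh_unit_key {H : Type*} [NormedAddCommGroup H] [InnerProductSpace ℂ H]
    (x y z : H) (hx : ‖x‖ = 1) (hy : ‖y‖ = 1) (hz : ‖z‖ = 1) :
    Real.sqrt (1 - ‖⟪x, z⟫_ℂ‖ ^ 2) ≤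
      Real.sqrt (1 - ‖⟪x, y⟫_ℂ‖ ^ 2) + Real.sqrt (1 - ‖⟪y, z⟫_ℂ‖ ^ 2) := by
  set a := ⟪x, y⟫_ℂ with ha
  set b := ⟪y, z⟫_ℂ with hb
  set c := ⟪x, z⟫_ℂ with hc
  set u := x - ⟪y, x⟫_ℂ • y with hu
  set w := z - ⟪y, z⟫_ℂ • y with hw
  have hyy : ⟪y, y⟫_ℂ = 1 := by
    rw [inner_self_eq_norm_sq_to_K, hy]; norm_num
  have hyx : ⟪y, x⟫_ℂ = starRingEnd ℂ a := (inner_conj_symm y x).symm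
  have huw : ⟪u, w⟫_ℂ = c - a * b := by
    simp only [hu, hw, inner_sub_left, inner_sub_right, inner_smul_left, inner_smul_right,
      hyy, mul_one, hyx, inner_conj_symm]
    rw [← ha, ← hb, ← hc]
    ring
  have hu2 : ‖u‖ ^ 2 = 1 - ‖a‖ ^ 2 := by
    rw [hu, coh_perp_norm y x hy hx, hyx, RCLike.norm_conj]
  have hw2 : ‖w‖ ^ 2 = 1 - ‖b‖ ^ 2 := by
    rw [hw, coh_perp_norm y z hy hz, ← hb]
  have hCS : ‖c - a * b‖ ≤ ‖u‖ * ‖w‖ := huw ▸ norm_inner_le_norm u w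
  have hun : ‖u‖ = Real.sqrt (1 - ‖a‖ ^ 2) := by
    rw [← hu2, Real.sqrt_sq (norm_nonneg u)]
  have hwn : ‖w‖ = Real.sqrt (1 - ‖b‖ ^ 2) := by
    rw [← hw2, Real.sqrt_sq (norm_nonneg w)]
  have hkey : ‖a‖ * ‖b‖ - Real.sqrt (1 - ‖a‖ ^ 2) * Real.sqrt (1 - ‖b‖ ^ 2) ≤ ‖c‖ := by
    have h1 : ‖a * b‖ - ‖c‖ ≤ ‖a * b - c‖ := norm_sub_norm_le _ _
    rw [norm_sub_rev] at h1
    rw [← norm_mul]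
    rw [← hun, ← hwn]
    linarith [hCS]
  have hA1 : ‖a‖ ≤ 1 := by
    have := norm_inner_le_norm (𝕜 := ℂ) x y; rw [hx, hy] at this; simpa [← ha] using this
  have hB1 : ‖b‖ ≤ 1 := by
    have := norm_inner_le_norm (𝕜 := ℂ) y z; rw [hy, hz] at this; simpa [← hb] using this
  have hC1 : ‖c‖ ≤ 1 := by
    have := norm_inner_le_norm (𝕜 := ℂ) x z; rw [hx, hz] at this; simpa [← hc] using this
  exact coh_real_key ‖a‖ ‖b‖ ‖c‖ _ _ (norm_nonneg a) (norm_nonneg b) (norm_nonneg c)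
    hC1 hA1 hB1 rfl rfl hkey

lemma coherence_eq_normalized {H : Type*} [NormedAddCommGroup H]
    [InnerProductSpace ℂ H] (u v : H) (hu : u ≠ 0) (hv : v ≠ 0) :
    coherence u v = ‖⟪(‖u‖⁻¹ • u : H), (‖v‖⁻¹ • v : H)⟫_ℂ‖ ^ 2 := by
  have hun : ‖u‖ ≠ 0 := norm_ne_zero_iff.mpr hu
  have hvn : ‖v‖ ≠ 0 := norm_ne_zero_iff.mpr hv
  rw [coherence, RCLike.real_smul_eq_coe_smul (K := ℂ) ‖u‖⁻¹ u,
    RCLike.real_smul_eq_coe_smul (K := ℂ) ‖v‖⁻¹ v, inner_smul_left, inner_smul_right]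
  simp only [norm_mul, RCLike.norm_conj, Complex.norm_real, norm_inv, norm_norm,
    Real.norm_eq_abs, abs_inv, abs_norm]
  field_simp
  ring_nf
  simp
  field_simp

/-- the single-frequency coherence distance `s(u, v) = √(1 − C(u, v))`
satisfies the triangle inequality on nonzero vectors. -/
theorem coherence_dist_triangle
    {H : Type*} [NormedAddCommGroup H] [InnerProductSpace ℂ H]
    (x y z : H) (hx : x ≠ 0) (hy : y ≠ 0) (hz : z ≠ 0) :
    Real.sqrt (1 - coherence x z) ≤
      Real.sqrt (1 - coherence x y) + Real.sqrt (1 - coherence y z) := by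
  have hx1 : ‖(‖x‖⁻¹ • x : H)‖ = 1 := norm_smul_inv_norm hx
  have hy1 : ‖(‖y‖⁻¹ • y : H)‖ = 1 := norm_smul_inv_norm hy
  have hz1 : ‖(‖z‖⁻¹ • z : H)‖ = 1 := norm_smul_inv_norm hz
  rw [coherence_eq_normalized x z hx hz, coherence_eq_normalized x y hx hy,
    coherence_eq_normalized y z hy hz]
  exact coh_unit_key _ _ _ hx1 hy1 hz1
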